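/- Let E_1,…,E_q be the level sets of a quadratic form on X_q = F_q^m (q = 3^k) satisfying q^{m}/(2q) < |E_ℓ| < 2q^m/q for each ℓ, and let V_j ⊆ F_3^q be subspaces with |V_j| = 3^j. Define B_j = (X_q × V_j) ∪ ⋃_{ℓ=1}^{min{j+k,q}} (E_ℓ × V_ℓ) for 1 ≤ j ≤ q. Then 3^j ≤ |B_j|/|X_q| ≤ 4·3^j. -/

import Mathlib

open Finset

/-- Cardinality bounds for the sets
`B_j = (X_q × V_j) ∪ ⋃_{ℓ=1}^{min(j+k,q)} (E_ℓ × V_ℓ)`, where the `E_ℓ` are level sets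
of the sum-of-squares quadratic form on `X_q = F_q^m` (with `q = 3^k`) of cardinality
strictly between `q^m/(2q)` and `2q^m/q`, and `|V_j| = 3^j`:
one has `3^j ≤ |B_j|/|X_q| ≤ 4·3^j`. -/
theorem stmt18 (F : Type*) [Field F] [Fintype F] [DecidableEq F]
    (k m q : ℕ) (hk : 1 ≤ k) (hm : 1 ≤ m) (hq : q = 3 ^ k)
    (hcard : Fintype.card F = q)
    (zs : ℕ → F) (E : ℕ → Finset (Fin m → F))
    (hE : ∀ ℓ, E ℓ = univ.filter (fun x : Fin m → F => ∑ i, x i ^ 2 = zs ℓ))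
    (hEcard : ∀ ℓ, 1 ≤ ℓ → ℓ ≤ q →
      (q : ℝ) ^ m / (2 * q) < ((E ℓ).card : ℝ) ∧ ((E ℓ).card : ℝ) < 2 * (q : ℝ) ^ m / q)
    (V : ℕ → Finset (Fin q → ZMod 3)) (hV : ∀ j ≤ q, (V j).card = 3 ^ j)
    (hVnest : ∀ j, V j ⊆ V (j + 1))
    (j : ℕ) (hj1 : 1 ≤ j) (hjq : j ≤ q) :
    (3 : ℝ) ^ j ≤
        ((((univ ×ˢ V j) ∪
            (Finset.Icc 1 (min (j + k) q)).biUnion (fun ℓ => E ℓ ×ˢ V ℓ)).card : ℝ) /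
          (Fintype.card (Fin m → F) : ℝ)) ∧
      ((((univ ×ˢ V j) ∪
            (Finset.Icc 1 (min (j + k) q)).biUnion (fun ℓ => E ℓ ×ˢ V ℓ)).card : ℝ) /
          (Fintype.card (Fin m → F) : ℝ)) ≤ 4 * (3 : ℝ) ^ j := by
  have hqpos : 0 < q := hq ▸ Nat.pow_pos (by norm_num)
  have hN : Fintype.card (Fin m → F) = q ^ m := by
    simp [Fintype.card_fun, hcard]
  have hNpos : (0 : ℝ) < (Fintype.card (Fin m → F) : ℝ) := by
    rw [hN]; positivity
  set M := min (j + k) q with hM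
  set B := (univ ×ˢ V j) ∪
      (Finset.Icc 1 M).biUnion (fun ℓ => E ℓ ×ˢ V ℓ) with hB
  have hA : ((univ ×ˢ V j : Finset ((Fin m → F) × (Fin q → ZMod 3))).card : ℝ)
      = (Fintype.card (Fin m → F) : ℝ) * 3 ^ j := by
    rw [Finset.card_product, card_univ, hV j hjq]
    push_cast
    ring
  constructor
  · rw [le_div_iff₀ hNpos]
    calc (3 : ℝ) ^ j * (Fintype.card (Fin m → F) : ℝ)
        = ((univ ×ˢ V j : Finset ((Fin m → F) × (Fin q → ZMod 3))).card : ℝ) := by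
          rw [hA]; ring
      _ ≤ (B.card : ℝ) := by
          exact_mod_cast Finset.card_le_card (Finset.subset_union_left)
  · rw [div_le_iff₀ hNpos]
    have hBle : (B.card : ℝ) ≤ ((univ ×ˢ V j : Finset ((Fin m → F) × (Fin q → ZMod 3))).card : ℝ)
        + ∑ ℓ ∈ Finset.Icc 1 M, ((E ℓ ×ˢ V ℓ).card : ℝ) := by
      have h1 : B.card ≤ (univ ×ˢ V j : Finset ((Fin m → F) × (Fin q → ZMod 3))).card
          + ((Finset.Icc 1 M).biUnion (fun ℓ => E ℓ ×ˢ V ℓ)).card := Finset.card_union_le _ _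
      have h2 : ((Finset.Icc 1 M).biUnion (fun ℓ => E ℓ ×ˢ V ℓ)).card
          ≤ ∑ ℓ ∈ Finset.Icc 1 M, (E ℓ ×ˢ V ℓ).card := Finset.card_biUnion_le
      push_cast
      exact_mod_cast le_trans h1 (by exact_mod_cast Nat.add_le_add_left h2 _)
    have hterm : ∀ ℓ ∈ Finset.Icc 1 M, ((E ℓ ×ˢ V ℓ).card : ℝ)
        ≤ (2 * (q : ℝ) ^ m / q) * 3 ^ ℓ := by
      intro ℓ hℓ
      rw [Finset.mem_Icc] at hℓ
      have hℓq : ℓ ≤ q := le_trans hℓ.2 (min_le_right _ _)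
      rw [Finset.card_product, hV ℓ hℓq]
      push_cast
      have := (hEcard ℓ hℓ.1 hℓq).2
      have h3 : (0:ℝ) < (3:ℝ) ^ ℓ := by positivity
      nlinarith [this, h3]
    have hsum : ∑ ℓ ∈ Finset.Icc 1 M, ((E ℓ ×ˢ V ℓ).card : ℝ)
        ≤ (2 * (q : ℝ) ^ m / q) * ∑ ℓ ∈ Finset.Icc 1 M, (3:ℝ) ^ ℓ := by
      rw [Finset.mul_sum]
      exact Finset.sum_le_sum hterm
    have hgeom : ∑ ℓ ∈ Finset.Icc 1 M, (3:ℝ) ^ ℓ ≤ (3/2) * 3 ^ M := by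
      have hsub : Finset.Icc 1 M ⊆ Finset.range (M + 1) := by
        intro x hx
        rw [Finset.mem_Icc] at hx
        rw [Finset.mem_range]
        omega
      have h1 : ∑ ℓ ∈ Finset.Icc 1 M, (3:ℝ) ^ ℓ ≤ ∑ ℓ ∈ Finset.range (M + 1), (3:ℝ) ^ ℓ :=
        Finset.sum_le_sum_of_subset_of_nonneg hsub (by intros; positivity)
      have h2 : ∑ ℓ ∈ Finset.range (M + 1), (3:ℝ) ^ ℓ = ((3:ℝ) ^ (M + 1) - 1) / (3 - 1) := by
        rw [geom_sum_eq (by norm_num)]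
      have h3 : ((3:ℝ) ^ (M + 1) - 1) / (3 - 1) ≤ (3/2) * 3 ^ M := by
        rw [pow_succ]
        have : (0:ℝ) ≤ (3:ℝ) ^ M := by positivity
        nlinarith
      linarith
    have hMle : (3:ℝ) ^ M ≤ 3 ^ (j + k) := by
      apply pow_le_pow_right₀ (by norm_num)
      exact min_le_left _ _
    have hjk : (3:ℝ) ^ (j + k) = 3 ^ j * q := by
      rw [pow_add, hq]
      push_cast
      ring
    have hqR : (0:ℝ) < (q:ℝ) := by exact_mod_cast hqpos
    have hfinal : (2 * (q : ℝ) ^ m / q) * ((3/2) * 3 ^ (j + k))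
        = 3 * (q:ℝ) ^ m * 3 ^ j := by
      rw [hjk]
      field_simp
    have hEfactor : (0:ℝ) ≤ 2 * (q : ℝ) ^ m / q := by positivity
    calc (B.card : ℝ)
        ≤ ((univ ×ˢ V j : Finset ((Fin m → F) × (Fin q → ZMod 3))).card : ℝ)
          + ∑ ℓ ∈ Finset.Icc 1 M, ((E ℓ ×ˢ V ℓ).card : ℝ) := hBle
      _ ≤ (Fintype.card (Fin m → F) : ℝ) * 3 ^ j
          + (2 * (q : ℝ) ^ m / q) * ((3/2) * 3 ^ (j + k)) := by
          rw [hA]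
          have : (2 * (q : ℝ) ^ m / q) * ∑ ℓ ∈ Finset.Icc 1 M, (3:ℝ) ^ ℓ
              ≤ (2 * (q : ℝ) ^ m / q) * ((3/2) * 3 ^ (j + k)) := by
            apply mul_le_mul_of_nonneg_left _ hEfactor
            calc ∑ ℓ ∈ Finset.Icc 1 M, (3:ℝ) ^ ℓ ≤ (3/2) * 3 ^ M := hgeom
              _ ≤ (3/2) * 3 ^ (j + k) := by linarith
          linarith [le_trans hsum this]
      _ ≤ 4 * (3:ℝ) ^ j * (Fintype.card (Fin m → F) : ℝ) := by
          rw [hfinal, hN]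
          push_cast
          ring_nf
          nlinarith [pow_pos hqR m]
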